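/- Let β > 0, let m ≥ 1, and let t : Fin m → ℝ be injective (pairwise distinct points). Then the m × m real matrix A with entries A i j = exp(−β·|t i − t j|) is positive definite. -/

import Mathlib

open Real Matrix Finset

private lemma posDef_of_psd_isUnit_det {n : Type*} [Fintype n] [DecidableEq n]
    {A : Matrix n n ℝ} (h1 : A.PosSemidef) (h2 : IsUnit A.det) : A.PosDef := by
  refine Matrix.posDef_iff_dotProduct_mulVec.mpr ⟨h1.1, fun x hx => ?_⟩
  rcases lt_or_eq_of_le ((Matrix.posSemidef_iff_dotProduct_mulVec.mp h1).2 x) with h | h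
  · exact h
  · exfalso
    have h0 : A *ᵥ x = 0 := (h1.dotProduct_mulVec_zero_iff x).mp h.symm
    have hinj : Function.Injective A.mulVec :=
      Matrix.mulVec_injective_iff_isUnit.mpr ((Matrix.isUnit_iff_isUnit_det A).mpr h2)
    exact hx (hinj (by simpa using h0))

private lemma posDef_submatrix_equiv {n p : Type*} [Fintype n] [DecidableEq n]
    [Fintype p] [DecidableEq p] {M : Matrix n n ℝ} (hM : M.PosDef) (e : p ≃ n) :
    (M.submatrix e e).PosDef := by
  refine Matrix.posDef_iff_dotProduct_mulVec.mpr ⟨hM.1.submatrix e, fun x hx => ?_⟩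
  have hy : (fun j => x (e.symm j)) ≠ 0 := by
    intro h
    apply hx
    funext i
    have := congrFun h (e i)
    simpa using this
  have := (Matrix.posDef_iff_dotProduct_mulVec.mp hM).2 (x := fun j => x (e.symm j)) hy
  rw [Matrix.submatrix_mulVec_equiv]
  have key : star x ⬝ᵥ ((M *ᵥ (x ∘ e.symm)) ∘ e)
      = star (fun j => x (e.symm j)) ⬝ᵥ M *ᵥ (fun j => x (e.symm j)) := calc
    star x ⬝ᵥ ((M *ᵥ (x ∘ e.symm)) ∘ e)
      = ∑ i, star (x i) * (M *ᵥ (x ∘ e.symm)) (e i) := rfl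
    _ = ∑ j, star (x (e.symm j)) * (M *ᵥ (x ∘ e.symm)) j := by
        refine Fintype.sum_equiv e _ _ fun i => by simp
    _ = star (fun j => x (e.symm j)) ⬝ᵥ M *ᵥ (fun j => x (e.symm j)) := by
        simp [dotProduct, Function.comp_def]
  rw [key]
  exact this


private lemma gram_posDef_strictMono (β : ℝ) (hβ : 0 < β) (m : ℕ)
    (s : Fin m → ℝ) (hs : StrictMono s) :
    (Matrix.of fun i j : Fin m => Real.exp (-β * |s i - s j|)).PosDef := by
  classical
  -- telescoping helper function
  set f : ℕ → ℝ := fun k => if h : 0 < k ∧ k ≤ m then Real.exp (2 * β * s ⟨k - 1, by omega⟩) else 0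
    with hf
  have hf0 : f 0 = 0 := by simp [hf]
  have hfsucc : ∀ k : Fin m, f (k.val + 1) = Real.exp (2 * β * s k) := by
    intro k
    have h : 0 < k.val + 1 ∧ k.val + 1 ≤ m := ⟨Nat.succ_pos _, k.isLt⟩
    simp only [hf, dif_pos h, Nat.add_sub_cancel]
  have hd : ∀ k : Fin m, 0 < f (k.val + 1) - f k.val := by
    intro k
    rw [hfsucc k]
    by_cases h0 : k.val = 0
    · have : ¬ (0 < k.val ∧ k.val ≤ m) := by omega
      simp only [hf, dif_neg this]
      simpa using Real.exp_pos _
    · have h : 0 < k.val ∧ k.val ≤ m := ⟨Nat.pos_of_ne_zero h0, k.isLt.le⟩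
      simp only [hf, dif_pos h]
      have hlt : (⟨k.val - 1, by omega⟩ : Fin m) < k := by
        simp [Fin.lt_def]; omega
      have := hs hlt
      have h2β : (0:ℝ) < 2 * β := by linarith
      exact sub_pos.mpr (Real.exp_lt_exp.mpr (by nlinarith))
  set B : Matrix (Fin m) (Fin m) ℝ := Matrix.of fun i k : Fin m =>
    if k ≤ i then Real.exp (-β * s i) * Real.sqrt (f (k.val + 1) - f k.val) else 0 with hB
  -- telescoping sum
  have hsum : ∀ i : Fin m,
      (∑ k : Fin m, if k ≤ i then f (k.val + 1) - f k.val else 0) = Real.exp (2 * β * s i) := by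
    intro i
    have h1 : (∑ k : Fin m, if k ≤ i then f (k.val + 1) - f k.val else 0)
        = ∑ n ∈ Finset.range m, (if n < i.val + 1 then f (n + 1) - f n else 0) := by
      rw [Finset.sum_range]
      refine Finset.sum_congr rfl fun k _ => ?_
      refine if_congr ?_ rfl rfl
      rw [Fin.le_def, Nat.lt_succ_iff]
    have hsub : Finset.range (i.val + 1) ⊆ Finset.range m :=
      Finset.range_subset_range.mpr i.isLt
    have h2 : ∑ n ∈ Finset.range m, (if n < i.val + 1 then f (n + 1) - f n else 0)
        = ∑ n ∈ Finset.range (i.val + 1), (if n < i.val + 1 then f (n + 1) - f n else 0) := by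
      refine (Finset.sum_subset hsub fun n hn hn2 => ?_).symm
      simp only [Finset.mem_range] at hn2
      simp [hn2]
    have h3 : ∑ n ∈ Finset.range (i.val + 1), (if n < i.val + 1 then f (n + 1) - f n else 0)
        = ∑ n ∈ Finset.range (i.val + 1), (f (n + 1) - f n) :=
      Finset.sum_congr rfl fun n hn => if_pos (Finset.mem_range.mp hn)
    rw [h1, h2, h3, Finset.sum_range_sub (fun n => f n), hf0, sub_zero]
    exact hfsucc i
  -- the key factorization, for i ≤ j
  have key : ∀ i j : Fin m, i ≤ j → (B * Bᵀ) i j = Real.exp (-β * (s j - s i)) := by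
    intro i j hij
    rw [Matrix.mul_apply]
    have : ∀ k : Fin m, B i k * Bᵀ k j
        = Real.exp (-β * s i) * Real.exp (-β * s j) * (if k ≤ i then f (k.val + 1) - f k.val else 0) := by
      intro k
      rw [Matrix.transpose_apply]
      by_cases hk : k ≤ i
      · have hkj : k ≤ j := le_trans hk hij
        simp only [hB, Matrix.of_apply, if_pos hk, if_pos hkj]
        rw [mul_mul_mul_comm, Real.mul_self_sqrt (hd k).le]
      · simp [hB, if_neg hk]
    rw [Finset.sum_congr rfl (fun k _ => this k), ← Finset.mul_sum, hsum i]
    rw [← Real.exp_add, ← Real.exp_add]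
    ring_nf
  -- A = B * Bᵀ
  have hA : (Matrix.of fun i j : Fin m => Real.exp (-β * |s i - s j|)) = B * Bᵀ := by
    funext i j
    rcases le_total i j with hij | hij
    · rw [key i j hij]
      have : |s i - s j| = s j - s i := by
        rw [abs_sub_comm]
        exact abs_of_nonneg (sub_nonneg.mpr (hs.monotone hij))
      simp [this]
    · have hsymm : (B * Bᵀ) i j = (B * Bᵀ) j i := by
        rw [Matrix.mul_apply, Matrix.mul_apply]
        exact Finset.sum_congr rfl fun k _ => by rw [Matrix.transpose_apply, Matrix.transpose_apply, mul_comm]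
      rw [hsymm, key j i hij]
      have : |s i - s j| = s i - s j := abs_of_nonneg (sub_nonneg.mpr (hs.monotone hij))
      simp [this]
  -- B has nonzero determinant
  have hBtri : B.BlockTriangular OrderDual.toDual := by
    intro i k hik
    have : ¬ k ≤ i := not_le.mpr hik
    simp [hB, this]
  have hdet : B.det = ∏ i : Fin m, B i i := Matrix.det_of_lowerTriangular B hBtri
  have hdetpos : 0 < B.det := by
    rw [hdet]
    apply Finset.prod_pos
    intro i _
    simp only [hB, Matrix.of_apply, if_pos (le_refl i)]
    exact mul_pos (Real.exp_pos _) (Real.sqrt_pos.mpr (hd i))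
  -- conclude
  rw [hA]
  have hconj : Bᴴ = Bᵀ := by
    funext i j
    simp [Matrix.conjTranspose_apply]
  refine posDef_of_psd_isUnit_det ?_ ?_
  · rw [← hconj]; exact Matrix.posSemidef_self_mul_conjTranspose B
  · rw [Matrix.det_mul, Matrix.det_transpose]
    exact (mul_pos hdetpos hdetpos).ne'.isUnit

theorem laplaceKernel_gram_posDef (β : ℝ) (hβ : 0 < β) (m : ℕ) (hm : 1 ≤ m)
    (t : Fin m → ℝ) (ht : Function.Injective t) :
    (Matrix.of fun i j : Fin m => Real.exp (-β * |t i - t j|)).PosDef := by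
  classical
  set σ : Equiv.Perm (Fin m) := Tuple.sort t with hσ
  have hmono : StrictMono (t ∘ σ) :=
    (Tuple.monotone_sort t).strictMono_of_injective (ht.comp σ.injective)
  have hpd := gram_posDef_strictMono β hβ m (t ∘ σ) hmono
  have heq : (Matrix.of fun i j : Fin m => Real.exp (-β * |t i - t j|))
      = (Matrix.of fun i j : Fin m => Real.exp (-β * |(t ∘ σ) i - (t ∘ σ) j|)).submatrix σ.symm σ.symm := by
    funext i j
    simp [Matrix.submatrix_apply]
  rw [heq]
  exact posDef_submatrix_equiv hpd σ.symm
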